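/- If g is a perfect Lie algebra with zero center, then every derivation D of Der(g) maps the ideal ad(g) of inner derivations into itself; i.e., for each x ∈ g there exists y ∈ g with D(ad_x) = ad_y. -/

import Mathlib

/-- If `g` is perfect with zero center, then every derivation of `Der(g)` maps
inner derivations to inner derivations. -/
theorem derivation_maps_inner_to_inner (K : Type*) (L : Type*) [Field K] [LieRing L]
    [LieAlgebra K L] (hperf : ⁅(⊤ : LieIdeal K L), (⊤ : LieIdeal K L)⁆ = ⊤)
    (hc : LieAlgebra.center K L = ⊥)
    (D : LieDerivation K (LieDerivation K L L) (LieDerivation K L L)) (x : L) :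
    ∃ y : L, D (LieDerivation.ad K L x) = LieDerivation.ad K L y := by
  have hx : x ∈ Submodule.span K { m : L | ∃ a ∈ (⊤ : LieIdeal K L),
      ∃ b ∈ (⊤ : LieIdeal K L), ⁅a, b⁆ = m } := by
    rw [← LieSubmodule.lieIdeal_oper_eq_linear_span', hperf]
    exact LieSubmodule.mem_top _
  induction hx using Submodule.span_induction with
  | mem m hm =>
      obtain ⟨a, -, b, -, rfl⟩ := hm
      refine ⟨(D (LieDerivation.ad K L a)) b - (D (LieDerivation.ad K L b)) a, ?_⟩
      rw [LieHom.map_lie, LieDerivation.apply_lie_eq_add]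
      rw [LieDerivation.lie_der_ad_eq_ad_der, ← lie_skew,
        LieDerivation.lie_der_ad_eq_ad_der, map_sub]
      abel
  | zero => exact ⟨0, by simp⟩
  | add a b _ _ ha hb =>
      obtain ⟨ya, hya⟩ := ha
      obtain ⟨yb, hyb⟩ := hb
      exact ⟨ya + yb, by simp [hya, hyb]⟩
  | smul t a _ ha =>
      obtain ⟨ya, hya⟩ := ha
      exact ⟨t • ya, by simp [hya]⟩
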